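/- Weak Bezout for real plane curves: let C₁ be a curve of degree at most d and C₂ a curve of degree at most e in ℝ^2 (zero sets of real polynomials of degrees in [1,d] and [1,e] respectively). If C₁ and C₂ have no common irreducible component, then |C₁ ∩ C₂| ≤ d·e. -/

import Mathlib

open scoped Classical

noncomputable section

/-- The zero set in `ℝ × ℝ` of a polynomial in two variables. -/
def zeroSet (p : MvPolynomial (Fin 2) ℝ) : Set (ℝ × ℝ) :=
  {x | MvPolynomial.eval ![x.1, x.2] p = 0}

/-- `C` is a curve of degree `e`: the zero set of a polynomial of total degree `e`. -/
def IsCurve (e : ℕ) (C : Set (ℝ × ℝ)) : Prop :=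
  ∃ p : MvPolynomial (Fin 2) ℝ, p.totalDegree = e ∧ C = zeroSet p

/-- `C` is a curve of degree at most `d` (and at least `1`). -/
def IsCurveLe (d : ℕ) (C : Set (ℝ × ℝ)) : Prop :=
  ∃ e, 1 ≤ e ∧ e ≤ d ∧ IsCurve e C

/-- Index set for the `d`-Veronese map: pairs `(n, m)` with `1 ≤ n + m ≤ d`.
It has `(d+2).choose 2 - 1` elements. -/
abbrev VIdx (d : ℕ) : Type :=
  {q : Fin (d + 1) × Fin (d + 1) // 1 ≤ (q.1 : ℕ) + (q.2 : ℕ) ∧ (q.1 : ℕ) + (q.2 : ℕ) ≤ d}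

/-- The `d`-Veronese map `ℝ² → ℝ^((d+2).choose 2 - 1)`. -/
def vero (d : ℕ) (a : ℝ × ℝ) : VIdx d → ℝ :=
  fun q => a.1 ^ (q.1.1 : ℕ) * a.2 ^ (q.1.2 : ℕ)

/-- Dimension of the affine hull of a set. -/
noncomputable def adim {α : Type*} (S : Set (α → ℝ)) : ℕ :=
  Module.finrank ℝ (affineSpan ℝ S).direction

/-- Dimension of an affine subspace. -/
noncomputable def fdim {α : Type*} (F : AffineSubspace ℝ (α → ℝ)) : ℕ :=
  Module.finrank ℝ F.direction

namespace BezoutAux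

open MvPolynomial Finset

/-! ### Exact multiplicativity of the total degree -/

lemma hc_top_ne_zero {σ K : Type*} [Field K] {a : MvPolynomial σ K} (ha : a ≠ 0) :
    homogeneousComponent a.totalDegree a ≠ 0 := by
  obtain ⟨d, hd, hdeg⟩ : ∃ d ∈ a.support, (d.sum fun _ e => e) = a.totalDegree := by
    obtain ⟨d, hd, h⟩ := Finset.exists_mem_eq_sup a.support
      (MvPolynomial.support_nonempty.mpr ha) (fun m => m.sum fun _ e => e)
    exact ⟨d, hd, h.symm⟩
  intro h0
  have := coeff_homogeneousComponent (n := a.totalDegree) (φ := a) d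
  rw [h0] at this
  simp only [coeff_zero] at this
  have hdd : d.degree = a.totalDegree := by
    simpa [Finsupp.degree_apply, Finsupp.sum] using hdeg
  rw [if_pos hdd] at this
  exact (MvPolynomial.mem_support_iff.mp hd) this.symm

lemma low_deg {σ K : Type*} [Field K] (a : MvPolynomial σ K)
    (h : (a - homogeneousComponent a.totalDegree a) ≠ 0) :
    (a - homogeneousComponent a.totalDegree a).totalDegree < a.totalDegree := by
  set al := a - homogeneousComponent a.totalDegree a with hal
  have hsupp : ∀ d ∈ al.support, (d.sum fun _ e => e) < a.totalDegree := by
    intro d hd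
    have hco : coeff d al ≠ 0 := MvPolynomial.mem_support_iff.mp hd
    have : coeff d al = coeff d a - (if d.degree = a.totalDegree then coeff d a else 0) := by
      rw [hal, MvPolynomial.coeff_sub, coeff_homogeneousComponent]
    by_cases hdd : d.degree = a.totalDegree
    · rw [if_pos hdd, sub_self] at this; exact absurd this hco
    · rw [if_neg hdd, sub_zero] at this
      have hda : d ∈ a.support := MvPolynomial.mem_support_iff.mpr (this ▸ hco)
      have hle : (d.sum fun _ e => e) ≤ a.totalDegree := MvPolynomial.le_totalDegree hda
      have : (d.sum fun _ e => e) ≠ a.totalDegree := by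
        simpa [Finsupp.degree_apply, Finsupp.sum] using hdd
      omega
  have hda : (0:ℕ) < a.totalDegree := by
    obtain ⟨d, hd⟩ := MvPolynomial.support_nonempty.mpr h
    have := hsupp d hd; omega
  rw [MvPolynomial.totalDegree]
  exact (Finset.sup_lt_iff (by simpa using hda)).mpr hsupp

lemma totalDegree_mul_eq {σ K : Type*} [Field K] {a b : MvPolynomial σ K}
    (ha : a ≠ 0) (hb : b ≠ 0) :
    (a * b).totalDegree = a.totalDegree + b.totalDegree := by
  refine le_antisymm (MvPolynomial.totalDegree_mul a b) ?_
  set da := a.totalDegree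
  set db := b.totalDegree
  set ta := homogeneousComponent da a with hta
  set tb := homogeneousComponent db b with htb
  have hta0 : ta ≠ 0 := hc_top_ne_zero ha
  have htb0 : tb ≠ 0 := hc_top_ne_zero hb
  have hta_deg : ta.IsHomogeneous da := homogeneousComponent_isHomogeneous da a
  have htb_deg : tb.IsHomogeneous db := homogeneousComponent_isHomogeneous db b
  have key : homogeneousComponent (da + db) (a * b) = ta * tb := by
    have hsplit : a * b = ta * tb + ((a - ta) * b + ta * (b - tb)) := by ring
    have hlow : ∀ c : MvPolynomial σ K, c.totalDegree < da + db →
        homogeneousComponent (da + db) c = 0 := fun c hc =>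
      homogeneousComponent_eq_zero _ c hc
    rw [hsplit, map_add, map_add]
    have h1 : homogeneousComponent (da + db) ((a - ta) * b) = 0 := by
      rcases eq_or_ne (a - ta) 0 with h | h
      · rw [h, zero_mul, map_zero]
      · refine hlow _ (lt_of_le_of_lt (MvPolynomial.totalDegree_mul _ _) ?_)
        have hlo := low_deg a h
        rw [← hta] at hlo
        omega
    have h2 : homogeneousComponent (da + db) (ta * (b - tb)) = 0 := by
      rcases eq_or_ne (b - tb) 0 with h | h
      · rw [h, mul_zero, map_zero]
      · refine hlow _ (lt_of_le_of_lt (MvPolynomial.totalDegree_mul _ _) ?_)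
        have hlo := low_deg b h
        rw [← htb] at hlo
        have hta_le : ta.totalDegree ≤ da := hta_deg.totalDegree_le
        omega
    rw [h1, h2, add_zero, add_zero]
    have : (ta * tb).IsHomogeneous (da + db) := hta_deg.mul htb_deg
    rw [homogeneousComponent_of_mem ((MvPolynomial.mem_homogeneousSubmodule _ _).mpr this),
      if_pos rfl]
  have hne : homogeneousComponent (da + db) (a * b) ≠ 0 := by
    rw [key]; exact mul_ne_zero hta0 htb0
  by_contra hlt
  push_neg at hlt
  exact hne (homogeneousComponent_eq_zero _ _ hlt)

/-! ### Dimension of the space of polynomials of degree at most `j` in two variables -/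

def Dset (j : ℕ) : Finset (ℕ × ℕ) := (range (j+1)).biUnion (fun s => Finset.HasAntidiagonal.antidiagonal s)

lemma mem_Dset {j : ℕ} {x : ℕ × ℕ} : x ∈ Dset j ↔ x.1 + x.2 ≤ j := by
  simp only [Dset, Finset.mem_biUnion, Finset.mem_range, Finset.HasAntidiagonal.mem_antidiagonal]
  constructor
  · rintro ⟨s, hs, rfl⟩; omega
  · intro h; exact ⟨x.1 + x.2, by omega, rfl⟩

lemma card_Dset (j : ℕ) : (Dset j).card = ∑ s ∈ range (j+1), (s+1) := by
  rw [Dset, Finset.card_biUnion]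
  · exact Finset.sum_congr rfl fun s _ => Nat.card_antidiagonal s
  · intro a _ b _ hab
    simp only [Finset.disjoint_left]
    intro x hx hx'
    rw [Finset.HasAntidiagonal.mem_antidiagonal] at hx hx'
    omega

noncomputable def idxEquiv (j : ℕ) :
    {n : Fin 2 →₀ ℕ | (n.sum fun _ e => e) ≤ j} ≃ {x // x ∈ Dset j} where
  toFun n := ⟨(n.1 0, n.1 1), by
    rcases n with ⟨n, hn⟩
    rw [mem_Dset]
    simpa [Finsupp.sum_fintype, Fin.sum_univ_two] using hn⟩
  invFun x := ⟨Finsupp.equivFunOnFinite.symm ![x.1.1, x.1.2], by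
    have := mem_Dset.mp x.2
    simp [Finsupp.sum_fintype, Fin.sum_univ_two]
    simpa using this⟩
  left_inv n := by
    ext i
    fin_cases i <;> simp
  right_inv x := by
    ext <;> simp

lemma two_mul_finrank (j : ℕ) :
    2 * Module.finrank ℝ (MvPolynomial.restrictTotalDegree (Fin 2) ℝ j) = (j+1) * (j+2) := by
  haveI : Fintype {n : Fin 2 →₀ ℕ | (n.sum fun _ e => e) ≤ j} :=
    Fintype.ofEquiv _ (idxEquiv j).symm
  have hb := Module.finrank_eq_card_basis
    (basisRestrictSupport ℝ { n : Fin 2 →₀ ℕ | (n.sum fun _ e => e) ≤ j })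
  rw [show MvPolynomial.restrictTotalDegree (Fin 2) ℝ j =
    restrictSupport ℝ { n : Fin 2 →₀ ℕ | (n.sum fun _ e => e) ≤ j } from rfl, hb]
  rw [Fintype.card_congr (idxEquiv j), Fintype.card_coe, card_Dset]
  have h1 : ∑ s ∈ range (j+1), (s+1) = ∑ s ∈ range (j+2), s := by
    rw [Finset.sum_range_succ' (fun s => s) (j+1)]
    simp
  have h2 : (∑ i ∈ range (j+2), i) * 2 = (j+2) * (j+2-1) := Finset.sum_range_id_mul_two (j+2)
  rw [h1, mul_comm, h2]
  have h3 : j + 2 - 1 = j + 1 := rfl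
  rw [h3, mul_comm]

/-! ### Evaluation as a linear map, and interpolation -/

/-- Evaluation at a point, as a linear map. -/
def evalL (v : ℝ × ℝ) : MvPolynomial (Fin 2) ℝ →ₗ[ℝ] ℝ where
  toFun := MvPolynomial.eval ![v.1, v.2]
  map_add' a b := by simp
  map_smul' r a := by simp [MvPolynomial.smul_eq_C_mul]

lemma exists_interp (T : Finset (ℝ × ℝ)) (k : ℕ) (hk : T.card ≤ k + 1) (f : T → ℝ) :
    ∃ v : MvPolynomial (Fin 2) ℝ, v.totalDegree ≤ k ∧
      ∀ t : T, MvPolynomial.eval ![(t : ℝ × ℝ).1, (t : ℝ × ℝ).2] v = f t := by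
  classical
  set ℓ : (ℝ × ℝ) → (ℝ × ℝ) → MvPolynomial (Fin 2) ℝ := fun t₀ t =>
    C (t₀.1 - t.1) * (X 0 - C t.1) + C (t₀.2 - t.2) * (X 1 - C t.2) with hℓ
  have hevalℓ : ∀ t₀ t s : ℝ × ℝ, MvPolynomial.eval ![s.1, s.2] (ℓ t₀ t) =
      (t₀.1 - t.1) * (s.1 - t.1) + (t₀.2 - t.2) * (s.2 - t.2) := by
    intro t₀ t s
    simp [hℓ]
  have hdegℓ : ∀ t₀ t : ℝ × ℝ, (ℓ t₀ t).totalDegree ≤ 1 := by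
    intro t₀ t
    have hx0 : (X 0 - C t.1 : MvPolynomial (Fin 2) ℝ).totalDegree ≤ 1 :=
      le_trans (MvPolynomial.totalDegree_sub_C_le _ _) (by simp)
    have hx1 : (X 1 - C t.2 : MvPolynomial (Fin 2) ℝ).totalDegree ≤ 1 :=
      le_trans (MvPolynomial.totalDegree_sub_C_le _ _) (by simp)
    refine le_trans (MvPolynomial.totalDegree_add _ _) (max_le ?_ ?_)
    · refine le_trans (MvPolynomial.totalDegree_mul _ _) ?_
      rw [MvPolynomial.totalDegree_C, zero_add]
      exact hx0
    · refine le_trans (MvPolynomial.totalDegree_mul _ _) ?_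
      rw [MvPolynomial.totalDegree_C, zero_add]
      exact hx1
  set g : (ℝ × ℝ) → MvPolynomial (Fin 2) ℝ := fun t₀ => ∏ t ∈ T.erase t₀, ℓ t₀ t with hg
  have hdegg : ∀ t₀ ∈ T, (g t₀).totalDegree ≤ k := by
    intro t₀ ht₀
    refine le_trans (MvPolynomial.totalDegree_finset_prod _ _) ?_
    calc ∑ t ∈ T.erase t₀, (ℓ t₀ t).totalDegree ≤ ∑ t ∈ T.erase t₀, 1 :=
          Finset.sum_le_sum fun t _ => hdegℓ t₀ t
      _ = (T.erase t₀).card := by simp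
      _ ≤ k := by
          rw [Finset.card_erase_of_mem ht₀]
          omega
  have hgval_ne : ∀ t₀ ∈ T, MvPolynomial.eval ![t₀.1, t₀.2] (g t₀) ≠ 0 := by
    intro t₀ _
    rw [hg]
    simp only [map_prod]
    refine Finset.prod_ne_zero_iff.mpr fun t ht => ?_
    rw [hevalℓ]
    have htne : t ≠ t₀ := Finset.ne_of_mem_erase ht
    intro h0
    have key : (t₀.1 - t.1) ^ 2 + (t₀.2 - t.2) ^ 2 = 0 := by nlinarith [h0]
    have h1 := (add_eq_zero_iff_of_nonneg (sq_nonneg _) (sq_nonneg _)).mp key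
    apply htne
    have e1 : t.1 = t₀.1 := by have := pow_eq_zero_iff (n := 2) (by norm_num) |>.mp h1.1; linarith
    have e2 : t.2 = t₀.2 := by have := pow_eq_zero_iff (n := 2) (by norm_num) |>.mp h1.2; linarith
    exact Prod.ext e1 e2
  have hgval_zero : ∀ t₀ t, t ∈ T.erase t₀ →
      MvPolynomial.eval ![t.1, t.2] (g t₀) = 0 := by
    intro t₀ t ht
    rw [hg]
    simp only [map_prod]
    refine Finset.prod_eq_zero ht ?_
    rw [hevalℓ]
    ring
  refine ⟨∑ t₀ ∈ T.attach, C (f t₀ / MvPolynomial.eval ![(t₀ : ℝ × ℝ).1, (t₀ : ℝ × ℝ).2]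
      (g t₀)) * g t₀, ?_, ?_⟩
  · refine le_trans (MvPolynomial.totalDegree_finset_sum _ _) ?_
    refine Finset.sup_le fun t₀ _ => ?_
    refine le_trans (MvPolynomial.totalDegree_mul _ _) ?_
    simpa [MvPolynomial.totalDegree_C] using hdegg t₀ t₀.2
  · intro t
    rw [map_sum]
    rw [Finset.sum_eq_single_of_mem t (Finset.mem_attach T t)]
    · rw [map_mul, MvPolynomial.eval_C,
        div_mul_cancel₀ _ (hgval_ne (t : ℝ × ℝ) t.2)]
    · intro t₀ _ hne
      rw [map_mul]
      have : (t : ℝ × ℝ) ∈ T.erase (t₀ : ℝ × ℝ) := by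
        refine Finset.mem_erase.mpr ⟨?_, t.2⟩
        exact fun h => hne (Subtype.ext h.symm)
      rw [hgval_zero _ _ this, mul_zero]

end BezoutAux

set_option maxHeartbeats 2000000 in
set_option synthInstance.maxHeartbeats 400000 in
theorem stmt_17 (d e : ℕ) (C₁ C₂ : Set (ℝ × ℝ)) (p q : MvPolynomial (Fin 2) ℝ)
    (hp1 : 1 ≤ p.totalDegree) (hpd : p.totalDegree ≤ d) (hC₁ : C₁ = zeroSet p)
    (hq1 : 1 ≤ q.totalDegree) (hqe : q.totalDegree ≤ e) (hC₂ : C₂ = zeroSet q)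
    (hcop : ∀ r : MvPolynomial (Fin 2) ℝ, Irreducible r → ¬(r ∣ p ∧ r ∣ q)) :
    (C₁ ∩ C₂).ncard ≤ d * e := by
  classical
  open MvPolynomial BezoutAux in
  by_contra hcon
  push_neg at hcon
  set m := p.totalDegree with hm
  set n := q.totalDegree with hn
  have hp0 : p ≠ 0 := fun h => by simp [h, MvPolynomial.totalDegree_zero] at hm; omega
  have hq0 : q ≠ 0 := fun h => by simp [h, MvPolynomial.totalDegree_zero] at hn; omega
  have hmn_de : m * n ≤ d * e := Nat.mul_le_mul hpd hqe
  -- extract a finite subset of size m*n+1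
  set N : ℕ := m * n + 1 with hN
  obtain ⟨S, hSsub, hScard⟩ := Set.exists_subset_card_eq (s := C₁ ∩ C₂) (n := N) (by omega)
  have hSfin : S.Finite := Set.finite_of_ncard_ne_zero (by omega)
  set T : Finset (ℝ × ℝ) := hSfin.toFinset with hT
  have hTcard : T.card = N := by
    rw [← hScard, Set.ncard_eq_toFinset_card S hSfin]
  have hTsub : ∀ t ∈ T, t ∈ C₁ ∩ C₂ := fun t ht => hSsub (by rwa [hT, Set.Finite.mem_toFinset] at ht)
  have hTzero : ∀ t ∈ T, MvPolynomial.eval ![t.1, t.2] p = 0 ∧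
      MvPolynomial.eval ![t.1, t.2] q = 0 := by
    intro t ht
    obtain ⟨h1, h2⟩ := hTsub t ht
    rw [hC₁] at h1; rw [hC₂] at h2
    exact ⟨h1, h2⟩
  -- relative primality
  have hrel : IsRelPrime q p := by
    intro c hcq hcp
    by_contra hu
    have hc0 : c ≠ 0 := by rintro rfl; exact hq0 (zero_dvd_iff.mp hcq)
    obtain ⟨r, hr, hrc⟩ := WfDvdMonoid.exists_irreducible_factor hu hc0
    exact hcop r hr ⟨hrc.trans hcp, hrc.trans hcq⟩
  -- the submodules
  set V := MvPolynomial.restrictTotalDegree (Fin 2) ℝ (m + n + N) with hV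
  set A := MvPolynomial.restrictTotalDegree (Fin 2) ℝ (n + N) with hA
  set B := MvPolynomial.restrictTotalDegree (Fin 2) ℝ (m + N) with hB
  set W := MvPolynomial.restrictTotalDegree (Fin 2) ℝ N with hW
  -- Φ : A × B → V, (a, b) ↦ a p + b q
  have memV : ∀ x : (A × B), (x.1.1 * p + x.2.1 * q).totalDegree ≤ m + n + N := by
    rintro ⟨a, b⟩
    dsimp only
    have ha := (MvPolynomial.mem_restrictTotalDegree _ _ _).mp a.2
    have hb := (MvPolynomial.mem_restrictTotalDegree _ _ _).mp b.2
    refine le_trans (MvPolynomial.totalDegree_add _ _) (max_le ?_ ?_)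
    · exact le_trans (MvPolynomial.totalDegree_mul _ _) (by omega)
    · exact le_trans (MvPolynomial.totalDegree_mul _ _) (by omega)
  set Φ : (A × B) →ₗ[ℝ] V :=
    { toFun := fun x => ⟨x.1.1 * p + x.2.1 * q,
        (MvPolynomial.mem_restrictTotalDegree _ _ _).mpr (memV x)⟩
      map_add' := by
        rintro x y
        apply Subtype.ext
        simp only [Prod.fst_add, Prod.snd_add, Submodule.coe_add]
        ring
      map_smul' := by
        rintro r x
        apply Subtype.ext
        simp only [Prod.smul_fst, Prod.smul_snd, SetLike.val_smul, RingHom.id_apply]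
        rw [smul_add, smul_mul_assoc, smul_mul_assoc] } with hΦ
  -- ι : W → A × B, c ↦ (c q, -(c p))
  have memA : ∀ c : W, ((c : MvPolynomial (Fin 2) ℝ) * q).totalDegree ≤ n + N := by
    intro c
    have hc := (MvPolynomial.mem_restrictTotalDegree _ _ _).mp c.2
    exact le_trans (MvPolynomial.totalDegree_mul _ _) (by omega)
  have memB : ∀ c : W, (-((c : MvPolynomial (Fin 2) ℝ) * p)).totalDegree ≤ m + N := by
    intro c
    have hc := (MvPolynomial.mem_restrictTotalDegree _ _ _).mp c.2
    rw [MvPolynomial.totalDegree_neg]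
    exact le_trans (MvPolynomial.totalDegree_mul _ _) (by omega)
  set ι : W →ₗ[ℝ] (A × B) :=
    { toFun := fun c => (⟨(c : MvPolynomial (Fin 2) ℝ) * q,
          (MvPolynomial.mem_restrictTotalDegree _ _ _).mpr (memA c)⟩,
        ⟨-((c : MvPolynomial (Fin 2) ℝ) * p),
          (MvPolynomial.mem_restrictTotalDegree _ _ _).mpr (memB c)⟩)
      map_add' := by
        rintro x y
        refine Prod.ext (Subtype.ext ?_) (Subtype.ext ?_) <;>
          (simp only [Prod.fst_add, Prod.snd_add, Submodule.coe_add]; ring)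
      map_smul' := by
        rintro r x
        refine Prod.ext (Subtype.ext ?_) (Subtype.ext ?_) <;>
          (simp only [Prod.smul_fst, Prod.smul_snd, SetLike.val_smul, RingHom.id_apply]
           rw [smul_mul_assoc]
           try rw [smul_neg]) } with hι
  -- evaluation map V → (T → ℝ)
  set ev : V →ₗ[ℝ] ({x // x ∈ T} → ℝ) :=
    LinearMap.pi (fun t : {x // x ∈ T} => (BezoutAux.evalL (t : ℝ × ℝ)).comp V.subtype) with hev
  -- kernel of Φ is contained in range of ι
  have hkerΦ : LinearMap.ker Φ ≤ LinearMap.range ι := by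
    rintro ⟨a, b⟩ hx
    have hab : (a : MvPolynomial (Fin 2) ℝ) * p + (b : MvPolynomial (Fin 2) ℝ) * q = 0 := by
      have := Subtype.ext_iff.mp (LinearMap.mem_ker.mp hx)
      simpa [hΦ] using this
    rcases eq_or_ne (a : MvPolynomial (Fin 2) ℝ) 0 with ha0 | ha0
    · have hb0 : (b : MvPolynomial (Fin 2) ℝ) = 0 := by
        have : (b : MvPolynomial (Fin 2) ℝ) * q = 0 := by rw [ha0] at hab; simpa using hab
        exact (mul_eq_zero.mp this).resolve_right hq0
      refine ⟨0, ?_⟩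
      refine Prod.ext (Subtype.ext ?_) (Subtype.ext ?_) <;> simp [hι, ha0, hb0]
    · have hdvd : q ∣ (a : MvPolynomial (Fin 2) ℝ) := by
        refine hrel.dvd_of_dvd_mul_left ?_
        exact ⟨-(b : MvPolynomial (Fin 2) ℝ), by linear_combination hab⟩
      obtain ⟨c, hc⟩ := hdvd
      have hc0 : c ≠ 0 := by rintro rfl; rw [mul_zero] at hc; exact ha0 hc
      have hcdeg : c.totalDegree ≤ N := by
        have hda := (MvPolynomial.mem_restrictTotalDegree _ _ _).mp a.2
        rw [hc, totalDegree_mul_eq hq0 hc0] at hda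
        omega
      have hbc : (b : MvPolynomial (Fin 2) ℝ) = -(c * p) := by
        have h1 : q * (c * p + (b : MvPolynomial (Fin 2) ℝ)) = 0 := by
          linear_combination hab - p * hc
        have h2 := (mul_eq_zero.mp h1).resolve_left hq0
        linear_combination h2
      refine ⟨⟨c, (MvPolynomial.mem_restrictTotalDegree _ _ _).mpr hcdeg⟩, ?_⟩
      refine Prod.ext (Subtype.ext ?_) (Subtype.ext ?_)
      · show c * q = (a : MvPolynomial (Fin 2) ℝ)
        rw [mul_comm]; exact hc.symm
      · show -(c * p) = (b : MvPolynomial (Fin 2) ℝ)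
        exact hbc.symm
  -- range of Φ is contained in kernel of ev
  have hrange : LinearMap.range Φ ≤ LinearMap.ker ev := by
    rintro y ⟨⟨a, b⟩, rfl⟩
    rw [LinearMap.mem_ker]
    funext t
    have hz := hTzero (t : ℝ × ℝ) t.2
    simp only [hev, hΦ, LinearMap.pi_apply, LinearMap.comp_apply, Submodule.subtype_apply]
    show BezoutAux.evalL (t : ℝ × ℝ) ((a : MvPolynomial (Fin 2) ℝ) * p + (b : MvPolynomial (Fin 2) ℝ) * q) = 0
    simp [BezoutAux.evalL, hz.1, hz.2]
  -- ev is surjective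
  have hsurj : Function.Surjective ev := by
    intro f
    obtain ⟨v, hvdeg, hvval⟩ := BezoutAux.exists_interp T (m + n + N) (by omega) f
    refine ⟨⟨v, (MvPolynomial.mem_restrictTotalDegree _ _ _).mpr hvdeg⟩, ?_⟩
    funext t
    simpa [hev, BezoutAux.evalL] using hvval t
  -- rank computations
  have hrk1 : Module.finrank ℝ ({x // x ∈ T} → ℝ) = N := by
    rw [Module.finrank_pi ℝ]
    rw [show Fintype.card {x // x ∈ T} = T.card from Fintype.card_coe T, hTcard]
  have hrk2 : Module.finrank ℝ (LinearMap.range ev) + Module.finrank ℝ (LinearMap.ker ev) =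
      Module.finrank ℝ V := LinearMap.finrank_range_add_finrank_ker ev
  have hrk3 : Module.finrank ℝ (LinearMap.range ev) = N := by
    rw [LinearMap.range_eq_top.mpr hsurj, finrank_top, hrk1]
  have hrk4 : Module.finrank ℝ (LinearMap.range Φ) + Module.finrank ℝ (LinearMap.ker Φ) =
      Module.finrank ℝ (A × B) := LinearMap.finrank_range_add_finrank_ker Φ
  have hrk5 : Module.finrank ℝ (A × B) = Module.finrank ℝ A + Module.finrank ℝ B :=
    Module.finrank_prod
  have hrk6 : Module.finrank ℝ (LinearMap.range Φ) ≤ Module.finrank ℝ (LinearMap.ker ev) :=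
    Submodule.finrank_mono hrange
  have hrk7 : Module.finrank ℝ (LinearMap.ker Φ) ≤ Module.finrank ℝ W :=
    le_trans (Submodule.finrank_mono hkerΦ) (LinearMap.finrank_range_le ι)
  -- the numerical identity
  have hid : 2 * Module.finrank ℝ V + 2 * Module.finrank ℝ W =
      2 * Module.finrank ℝ A + 2 * Module.finrank ℝ B + 2 * (m * n) := by
    rw [hV, hA, hB, hW, BezoutAux.two_mul_finrank, BezoutAux.two_mul_finrank,
      BezoutAux.two_mul_finrank, BezoutAux.two_mul_finrank]
    ring
  obtain ⟨P, hP⟩ : ∃ P, m * n = P := ⟨_, rfl⟩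
  rw [hP] at hid
  have hNP : N = P + 1 := by rw [hN, hP]
  omega
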